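/- Let π be a permutation of {1,...,n} with all displacements π(i) − i in {−2, −1, j−2} for some j ≥ 3, and suppose r is the smallest index greater than 1 with π(r) − r = j − 2 (assuming such r exists). Then the word obtained by deleting positions 1 through r−1 from π and relabeling values (subtracting r−1 from each value greater than j−1, and replacing each of the values 1,...,r−2 appropriately) yields a permutation π' of {1,...,n−r+1} all of whose displacements lie in {−2, −1, j−2}. -/
import Mathlib


/-- Reduction lemma. Let `π` be a permutation of `{1,…,n}` (modelled on `Fin n`,
positions 1-indexed via `p ↦ p - 1`) with all displacements in `{−2, −1, j−2}`,
`j ≥ 3`, and let `r > 1` be the smallest 1-indexed position with displacement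
`j − 2`. Then deleting the first `r − 1` positions and relabeling yields a
permutation `π'` of `{1,…,n−r+1}` with all displacements in `{−2, −1, j−2}`,
whose displacement list begins with `j − 2`, followed by `j − r` entries equal to
`−1`, and thereafter agrees with the tail of the displacement list of `π`
(namely `d'(p) = d(p + r − 1)` for `p > j − r + 1`). -/
theorem stmt19 (n j : ℕ) (hj : 3 ≤ j) (π : Equiv.Perm (Fin n))
    (hd : ∀ i : Fin n,
      (((π i : Fin n) : ℕ) : ℤ) - ((i : ℕ) : ℤ) ∈ ({-2, -1, (j : ℤ) - 2} : Set ℤ))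
    (r : ℕ) (hr2 : 2 ≤ r) (hrn : r - 1 < n)
    (hr : (((π ⟨r - 1, hrn⟩ : Fin n) : ℕ) : ℤ) - ((r - 1 : ℕ) : ℤ) = (j : ℤ) - 2)
    (hmin : ∀ i (hi : i < n), 1 ≤ i → i < r - 1 →
      (((π ⟨i, hi⟩ : Fin n) : ℕ) : ℤ) - (i : ℤ) ≠ (j : ℤ) - 2) :
    ∃ π' : Equiv.Perm (Fin (n - r + 1)),
      (∀ i : Fin (n - r + 1),
        (((π' i : Fin (n - r + 1)) : ℕ) : ℤ) - ((i : ℕ) : ℤ)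
          ∈ ({-2, -1, (j : ℤ) - 2} : Set ℤ)) ∧
      (∀ h0 : 0 < n - r + 1,
        (((π' ⟨0, h0⟩ : Fin (n - r + 1)) : ℕ) : ℤ) = (j : ℤ) - 2) ∧
      (∀ i (hi : i < n - r + 1), 1 ≤ i → i ≤ j - r →
        (((π' ⟨i, hi⟩ : Fin (n - r + 1)) : ℕ) : ℤ) - (i : ℤ) = -1) ∧
      (∀ i (hi : i < n - r + 1), j - r + 1 ≤ i → ∀ hi' : i + r - 1 < n,
        (((π' ⟨i, hi⟩ : Fin (n - r + 1)) : ℕ) : ℤ) - (i : ℤ)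
          = (((π ⟨i + r - 1, hi'⟩ : Fin n) : ℕ) : ℤ) - ((i + r - 1 : ℕ) : ℤ)) := by
  have h0n : 0 < n := by omega
  -- trichotomy for displacements, in ℕ form
  have key : ∀ i (hi : i < n), ((π ⟨i, hi⟩ : Fin n) : ℕ) + 2 = i ∨
      ((π ⟨i, hi⟩ : Fin n) : ℕ) + 1 = i ∨ ((π ⟨i, hi⟩ : Fin n) : ℕ) + 2 = i + j := by
    intro i hi
    have h := hd ⟨i, hi⟩
    simp only [Set.mem_insert_iff, Set.mem_singleton_iff] at h
    omega
  have L1 : ((π ⟨0, h0n⟩ : Fin n) : ℕ) + 2 = j := by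
    rcases key 0 h0n with h | h | h <;> omega
  have L2 : ∀ i, ∀ hi : i < n, 1 ≤ i → i ≤ r - 2 → ((π ⟨i, hi⟩ : Fin n) : ℕ) + 1 = i := by
    intro i
    induction i using Nat.strong_induction_on with
    | _ i IH =>
      intro hi h1 h2
      rcases key i hi with h | h | h
      · exfalso
        have h2i : 2 ≤ i := by omega
        have hi' : i - 1 < n := by omega
        have hIH := IH (i - 1) (by omega) hi' (by omega) (by omega)
        have heq : π ⟨i - 1, hi'⟩ = π ⟨i, hi⟩ := Fin.ext (by omega)
        have h3 := π.injective heq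
        simp only [Fin.mk.injEq] at h3
        omega
      · omega
      · exact absurd (by omega) (hmin i hi h1 (by omega))
  have hrv : ((π ⟨r - 1, hrn⟩ : Fin n) : ℕ) + 3 = r + j := by omega
  have hjr : r ≤ j := by
    by_contra hc
    push_neg at hc
    have hjn : j - 1 < n := by omega
    have hL := L2 (j - 1) hjn (by omega) (by omega)
    have heq : π ⟨j - 1, hjn⟩ = π ⟨0, h0n⟩ := Fin.ext (by omega)
    have h3 := π.injective heq
    simp only [Fin.mk.injEq] at h3
    omega
  have hrjn : r + j ≤ n + 3 := by
    have := (π ⟨r - 1, hrn⟩).isLt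
    omega
  have L3 : ∀ i, ∀ hi : i < n, r ≤ i → i ≤ j - 1 → ((π ⟨i, hi⟩ : Fin n) : ℕ) + 2 = i := by
    intro i
    induction i using Nat.strong_induction_on with
    | _ i IH =>
      intro hi hri hij
      have hi2 : i - 2 < n := by omega
      set k := π.symm ⟨i - 2, hi2⟩ with hk
      have hπkv : ((π ⟨(k : ℕ), k.isLt⟩ : Fin n) : ℕ) = i - 2 := by
        have : π ⟨(k : ℕ), k.isLt⟩ = ⟨i - 2, hi2⟩ := by
          rw [show (⟨(k : ℕ), k.isLt⟩ : Fin n) = k from rfl, hk]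
          exact π.apply_symm_apply _
        rw [this]
      rcases key (k : ℕ) k.isLt with h | h | h
      · have heq : (⟨i, hi⟩ : Fin n) = ⟨(k : ℕ), k.isLt⟩ := Fin.ext (by simp only [Fin.val_mk]; omega)
        rw [heq, hπkv]
        omega
      · exfalso
        by_cases hir : i = r
        · have heq : (⟨(k : ℕ), k.isLt⟩ : Fin n) = ⟨r - 1, hrn⟩ := Fin.ext (by simp only [Fin.val_mk]; omega)
          rw [heq] at hπkv
          omega
        · have h1 : i - 1 < n := by omega
          have heq : (⟨(k : ℕ), k.isLt⟩ : Fin n) = ⟨i - 1, h1⟩ := Fin.ext (by simp only [Fin.val_mk]; omega)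
          rw [heq] at hπkv
          have := IH (i - 1) (by omega) h1 (by omega) (by omega)
          omega
      · omega
  have L4 : ∀ i, ∀ hi : i < n, j ≤ i → j - 1 ≤ ((π ⟨i, hi⟩ : Fin n) : ℕ) := by
    intro i hi hji
    by_contra hc
    push_neg at hc
    by_cases h1 : ((π ⟨i, hi⟩ : Fin n) : ℕ) + 2 = j
    · have heq : π ⟨i, hi⟩ = π ⟨0, h0n⟩ := Fin.ext (by omega)
      have h3 := π.injective heq
      simp only [Fin.mk.injEq] at h3
      omega
    · by_cases h2 : ((π ⟨i, hi⟩ : Fin n) : ℕ) + 1 ≤ r - 2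
      · have hvn : ((π ⟨i, hi⟩ : Fin n) : ℕ) + 1 < n := by omega
        have hL := L2 (((π ⟨i, hi⟩ : Fin n) : ℕ) + 1) hvn (by omega) (by omega)
        have heq : π ⟨i, hi⟩ = π ⟨((π ⟨i, hi⟩ : Fin n) : ℕ) + 1, hvn⟩ := Fin.ext (by omega)
        have h3 := π.injective heq
        simp only [Fin.mk.injEq] at h3
        omega
      · have hvn : ((π ⟨i, hi⟩ : Fin n) : ℕ) + 2 < n := by omega
        have hL := L3 (((π ⟨i, hi⟩ : Fin n) : ℕ) + 2) hvn (by omega) (by omega)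
        have heq : π ⟨i, hi⟩ = π ⟨((π ⟨i, hi⟩ : Fin n) : ℕ) + 2, hvn⟩ := Fin.ext (by omega)
        have h3 := π.injective heq
        simp only [Fin.mk.injEq] at h3
        omega
  have hL4' : ∀ i, j - r + 1 ≤ i → ∀ h : i + r - 1 < n,
      j - 1 ≤ ((π ⟨i + r - 1, h⟩ : Fin n) : ℕ) := by
    intro i h1 h
    exact L4 _ h (by omega)
  set g : ℕ → ℕ := fun i =>
    if i = 0 then j - 2
    else if i ≤ j - r then i - 1
    else if h : i + r - 1 < n then ((π ⟨i + r - 1, h⟩ : Fin n) : ℕ) - (r - 1) else 0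
    with hg
  have hglt : ∀ i, i < n - r + 1 → g i < n - r + 1 := by
    intro i hi
    simp only [hg]
    split_ifs with h0 h1 h2
    · omega
    · omega
    · have := (π ⟨i + r - 1, h2⟩ : Fin n).isLt
      omega
    · omega
  have hchar : ∀ i, i < n - r + 1 →
      (i = 0 ∧ g i = j - 2) ∨
      (1 ≤ i ∧ i ≤ j - r ∧ g i + 1 = i) ∨
      (j - r + 1 ≤ i ∧ ∃ h : i + r - 1 < n,
        g i + (r - 1) = ((π ⟨i + r - 1, h⟩ : Fin n) : ℕ) ∧
        j - 1 ≤ ((π ⟨i + r - 1, h⟩ : Fin n) : ℕ)) := by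
    intro i hi
    simp only [hg]
    split_ifs with h0 h1 h2
    · exact Or.inl ⟨h0, rfl⟩
    · exact Or.inr (Or.inl ⟨by omega, h1, by omega⟩)
    · refine Or.inr (Or.inr ⟨by omega, h2, ?_, hL4' i (by omega) h2⟩)
      have hb := hL4' i (by omega) h2
      omega
    · omega
  have hginj : ∀ i k, i < n - r + 1 → k < n - r + 1 → g i = g k → i = k := by
    intro i k hi hk hgik
    rcases hchar i hi with ⟨h0i, hvi⟩ | ⟨h1i, h2i, hvi⟩ | ⟨h1i, hni, hvi, hbi⟩ <;>
      rcases hchar k hk with ⟨h0k, hvk⟩ | ⟨h1k, h2k, hvk⟩ | ⟨h1k, hnk, hvk, hbk⟩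
    · omega
    · omega
    · have heq : π ⟨k + r - 1, hnk⟩ = π ⟨r - 1, hrn⟩ := Fin.ext (by omega)
      have h3 := π.injective heq
      simp only [Fin.mk.injEq] at h3
      omega
    · omega
    · omega
    · omega
    · have heq : π ⟨i + r - 1, hni⟩ = π ⟨r - 1, hrn⟩ := Fin.ext (by omega)
      have h3 := π.injective heq
      simp only [Fin.mk.injEq] at h3
      omega
    · omega
    · have heq : π ⟨i + r - 1, hni⟩ = π ⟨k + r - 1, hnk⟩ := Fin.ext (by omega)
      have h3 := π.injective heq
      simp only [Fin.mk.injEq] at h3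
      omega
  have hbij : Function.Bijective
      (fun i : Fin (n - r + 1) => (⟨g i.1, hglt i.1 i.2⟩ : Fin (n - r + 1))) := by
    refine Finite.injective_iff_bijective.mp ?_
    intro a b hab
    exact Fin.ext (hginj a.1 b.1 a.2 b.2 (by simpa using congrArg Fin.val hab))
  refine ⟨Equiv.ofBijective _ hbij, ?_, ?_, ?_, ?_⟩
  · intro i
    have happ : ((Equiv.ofBijective _ hbij i : Fin (n - r + 1)) : ℕ) = g i.1 := rfl
    simp only [Set.mem_insert_iff, Set.mem_singleton_iff]
    rcases hchar i.1 i.2 with ⟨h0, hv⟩ | ⟨h1, h2, hv⟩ | ⟨h1, hn, hv, hb⟩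
    · right; right; omega
    · right; left; omega
    · have hh := hd ⟨i.1 + r - 1, hn⟩
      simp only [Set.mem_insert_iff, Set.mem_singleton_iff] at hh
      omega
  · intro h0'
    have happ : ((Equiv.ofBijective _ hbij ⟨0, h0'⟩ : Fin (n - r + 1)) : ℕ) = g 0 := rfl
    have hg0 : g 0 = j - 2 := by simp [hg]
    omega
  · intro i hi h1 h2
    have happ : ((Equiv.ofBijective _ hbij ⟨i, hi⟩ : Fin (n - r + 1)) : ℕ) = g i := rfl
    rcases hchar i hi with ⟨h0, hv⟩ | ⟨h1', h2', hv⟩ | ⟨h1', hn, hv, hb⟩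
    · omega
    · omega
    · omega
  · intro i hi h1 hi'
    have happ : ((Equiv.ofBijective _ hbij ⟨i, hi⟩ : Fin (n - r + 1)) : ℕ) = g i := rfl
    rcases hchar i hi with ⟨h0, hv⟩ | ⟨h1', h2', hv⟩ | ⟨h1', hn, hv, hb⟩
    · omega
    · omega
    · have hv' : g i + (r - 1) = ((π ⟨i + r - 1, hi'⟩ : Fin n) : ℕ) := hv
      have hb' : j - 1 ≤ ((π ⟨i + r - 1, hi'⟩ : Fin n) : ℕ) := hb
      omega
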